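/- Let P and Q be Borel probability measures on ℝ and suppose the distribution function F_P is continuous. Then the map T^com := F_Q^← ∘ F_P pushes P forward to Q (i.e. P∘(T^com)⁻¹ = Q), and the pushforward of P under the map x ↦ (x, T^com(x)) equals the comonotone coupling 𝔓^com, the pushforward of Lebesgue measure on (0,1) under x ↦ (F_P^←(x), F_Q^←(x)). -/

import Mathlib

open Set MeasureTheory
open scoped ENNReal

/-- The quantile function `F_P^←(x) := inf{z ∈ ℝ : F_P(z) ≥ x}` of a Borel
probability measure `P` on `ℝ`, where `F_P(z) := P((−∞,z])`. -/
noncomputable def quantileFn (P : Measure ℝ) (x : ℝ) : ℝ :=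
  sInf {z : ℝ | x ≤ (P (Set.Iic z)).toReal}

open ProbabilityTheory Filter Topology

lemma quantileFn_eq (R : Measure ℝ) [IsProbabilityMeasure R] (x : ℝ) :
    quantileFn R x = sInf {z : ℝ | x ≤ cdf R z} := by
  simp_rw [quantileFn, cdf_eq_real, measureReal_def]

lemma nonempty_quantileSet (R : Measure ℝ) [IsProbabilityMeasure R] {x : ℝ} (hx : x < 1) :
    {z : ℝ | x ≤ cdf R z}.Nonempty := by
  have := (tendsto_cdf_atTop R).eventually_const_lt hx
  rcases this.exists with ⟨z, hz⟩
  exact ⟨z, hz.le⟩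

lemma bddBelow_quantileSet (R : Measure ℝ) [IsProbabilityMeasure R] {x : ℝ} (hx : 0 < x) :
    BddBelow {z : ℝ | x ≤ cdf R z} := by
  have := (tendsto_cdf_atBot R).eventually_lt_const hx
  rcases this.exists with ⟨z0, hz0⟩
  refine ⟨z0, fun w hw => ?_⟩
  by_contra h
  push_neg at h
  exact absurd (le_trans hw (monotone_cdf R h.le)) (not_le.2 hz0)

lemma le_cdf_quantileFn (R : Measure ℝ) [IsProbabilityMeasure R] {x : ℝ}
    (hx0 : 0 < x) (hx1 : x < 1) : x ≤ cdf R (quantileFn R x) := by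
  rw [quantileFn_eq]
  set S := {z : ℝ | x ≤ cdf R z} with hS
  have hne := nonempty_quantileSet R hx1
  have hbd := bddBelow_quantileSet R hx0
  set q := sInf S with hq
  obtain ⟨u, hu_mono, hu_tendsto, hu_mem⟩ := exists_seq_tendsto_sInf hne hbd
  have h1 : Filter.Tendsto u atTop (𝓝[Set.Ici q] q) := by
    rw [tendsto_nhdsWithin_iff]
    exact ⟨hu_tendsto, Filter.Eventually.of_forall fun n => csInf_le hbd (hu_mem n)⟩
  have h2 : Filter.Tendsto (fun n => cdf R (u n)) atTop (𝓝 (cdf R q)) :=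
    ((cdf R).right_continuous q).tendsto.comp h1
  exact ge_of_tendsto h2 (Filter.Eventually.of_forall fun n => hu_mem n)

lemma quantileFn_le_iff (R : Measure ℝ) [IsProbabilityMeasure R] {x z : ℝ}
    (hx0 : 0 < x) (hx1 : x < 1) : quantileFn R x ≤ z ↔ x ≤ cdf R z := by
  constructor
  · intro h
    exact (le_cdf_quantileFn R hx0 hx1).trans (monotone_cdf R h)
  · intro h
    rw [quantileFn_eq]
    exact csInf_le (bddBelow_quantileSet R hx0) h

lemma monotoneOn_quantileFn (R : Measure ℝ) [IsProbabilityMeasure R] :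
    MonotoneOn (quantileFn R) (Set.Ioo (0:ℝ) 1) := by
  intro x hx y hy hxy
  rw [quantileFn_eq, quantileFn_eq]
  exact csInf_le_csInf (bddBelow_quantileSet R hx.1)
    (nonempty_quantileSet R hy.2) (fun z hz => le_trans hxy hz)

lemma aemeasurable_quantileFn (R : Measure ℝ) [IsProbabilityMeasure R] :
    AEMeasurable (quantileFn R) (volume.restrict (Set.Ioo (0:ℝ) 1)) :=
  aemeasurable_restrict_of_monotoneOn measurableSet_Ioo (monotoneOn_quantileFn R)

instance : IsProbabilityMeasure (volume.restrict (Set.Ioo (0:ℝ) 1)) :=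
  ⟨by simp [Real.volume_Ioo]⟩

lemma volume_Iic_inter_Ioo {c : ℝ} (hc0 : 0 ≤ c) (hc1 : c ≤ 1) :
    volume (Set.Iic c ∩ Set.Ioo (0:ℝ) 1) = ENNReal.ofReal c := by
  apply le_antisymm
  · calc volume (Set.Iic c ∩ Set.Ioo (0:ℝ) 1) ≤ volume (Set.Ioc (0:ℝ) c) := by
          apply measure_mono
          rintro x ⟨hx1, hx2, _⟩
          exact ⟨hx2, hx1⟩
      _ = ENNReal.ofReal c := by rw [Real.volume_Ioc, sub_zero]
  · calc ENNReal.ofReal c = volume (Set.Ioo (0:ℝ) c) := by rw [Real.volume_Ioo, sub_zero]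
      _ ≤ volume (Set.Iic c ∩ Set.Ioo (0:ℝ) 1) := by
          apply measure_mono
          rintro x ⟨hx1, hx2⟩
          exact ⟨hx2.le, hx1, lt_of_lt_of_le hx2 hc1⟩

/-- Inverse transform sampling: the quantile function pushes the uniform measure on `(0,1)`
forward to `R`. -/
lemma map_quantileFn (R : Measure ℝ) [IsProbabilityMeasure R] :
    (volume.restrict (Set.Ioo (0:ℝ) 1)).map (quantileFn R) = R := by
  refine Measure.ext_of_Iic _ R (fun z => ?_)
  rw [Measure.map_apply_of_aemeasurable (aemeasurable_quantileFn R) measurableSet_Iic,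
    Measure.restrict_apply₀]
  · have hset : quantileFn R ⁻¹' Set.Iic z ∩ Set.Ioo 0 1
        = Set.Iic (cdf R z) ∩ Set.Ioo (0:ℝ) 1 := by
      ext x
      simp only [Set.mem_inter_iff, Set.mem_preimage, Set.mem_Iic, Set.mem_Ioo,
        and_congr_left_iff]
      rintro ⟨hx0, hx1⟩
      exact quantileFn_le_iff R hx0 hx1
    rw [hset, volume_Iic_inter_Ioo (cdf_nonneg R z) (cdf_le_one R z), ofReal_cdf]
  · exact (aemeasurable_quantileFn R).nullMeasurable measurableSet_Iic

/-- The probability integral transform: a continuous cdf pushes its measure forward to the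
uniform measure on `(0,1)`. -/
lemma map_cdf (P : Measure ℝ) [IsProbabilityMeasure P] (hFP : Continuous (cdf P)) :
    P.map (cdf P) = volume.restrict (Set.Ioo (0:ℝ) 1) := by
  refine Measure.ext_of_Iic _ _ (fun y => ?_)
  rw [Measure.map_apply hFP.measurable measurableSet_Iic, Measure.restrict_apply measurableSet_Iic]
  rcases lt_or_ge y 0 with hy | hy0
  · have h1 : cdf P ⁻¹' Set.Iic y = ∅ := by
      ext x
      simp only [Set.mem_preimage, Set.mem_Iic, Set.mem_empty_iff_false, iff_false, not_le]
      exact lt_of_lt_of_le hy (cdf_nonneg P x)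
    have h2 : Set.Iic y ∩ Set.Ioo (0:ℝ) 1 = ∅ := by
      ext x
      simp only [Set.mem_inter_iff, Set.mem_Iic, Set.mem_Ioo, Set.mem_empty_iff_false, iff_false]
      rintro ⟨h1, h2, _⟩
      linarith
    rw [h1, h2, measure_empty, measure_empty]
  rcases le_or_gt 1 y with hy1 | hy1
  · have h1 : cdf P ⁻¹' Set.Iic y = Set.univ := by
      ext x
      simp only [Set.mem_preimage, Set.mem_Iic, Set.mem_univ, iff_true]
      exact (cdf_le_one P x).trans hy1
    have h2 : Set.Iic y ∩ Set.Ioo (0:ℝ) 1 = Set.Ioo 0 1 := by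
      apply Set.inter_eq_self_of_subset_right
      rintro x ⟨_, hx1⟩
      exact hx1.le.trans hy1
    rw [h1, h2, measure_univ, Real.volume_Ioo, sub_zero, ENNReal.ofReal_one]
  · -- 0 ≤ y < 1
    have key : P (cdf P ⁻¹' Set.Iic y) = ENNReal.ofReal y := by
      set s := cdf P ⁻¹' Set.Iic y with hs
      rcases Set.eq_empty_or_nonempty s with hse | hsne
      · -- all values of cdf exceed y; then y ≤ 0 so y = 0
        have hy_le : y ≤ 0 := by
          by_contra h
          push_neg at h
          have := (tendsto_cdf_atBot P).eventually_lt_const h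
          rcases this.exists with ⟨z, hz⟩
          exact absurd (Set.eq_empty_iff_forall_notMem.1 hse z) (by simp [hs, hz.le])
        have hy_eq : y = 0 := le_antisymm hy_le hy0
        rw [hse, measure_empty, hy_eq, ENNReal.ofReal_zero]
      · have hbdd : BddAbove s := by
          have := (tendsto_cdf_atTop P).eventually_const_lt hy1
          rcases this.exists with ⟨M, hM⟩
          refine ⟨M, fun w hw => ?_⟩
          by_contra h
          push_neg at h
          exact absurd (le_trans (monotone_cdf P h.le) hw) (not_le.2 hM)
        have hclosed : IsClosed s := IsClosed.preimage hFP isClosed_Iic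
        set b := sSup s with hb
        have hbs : b ∈ s := hclosed.csSup_mem hsne hbdd
        have hFb_le : cdf P b ≤ y := hbs
        have hFb_eq : cdf P b = y := by
          by_contra h
          have hFb_lt : cdf P b < y := lt_of_le_of_ne hFb_le h
          have := (tendsto_cdf_atTop P).eventually_const_lt hy1
          rcases (this.and (eventually_ge_atTop b)).exists with ⟨M, hM, hbM⟩
          have : y ∈ Set.Icc (cdf P b) (cdf P M) := ⟨hFb_le, hM.le⟩
          obtain ⟨c, hc_mem, hc_eq⟩ := intermediate_value_Icc hbM hFP.continuousOn this
          have hcs : c ∈ s := by simp [hs, hc_eq.le]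
          have : c ≤ b := le_csSup hbdd hcs
          have : cdf P c ≤ cdf P b := monotone_cdf P this
          rw [hc_eq] at this
          linarith
        have hseq : s = Set.Iic b := by
          ext x
          constructor
          · exact fun hx => le_csSup hbdd hx
          · intro hx
            simpa [hs, hFb_eq] using (monotone_cdf P hx).trans_eq hFb_eq
        rw [hseq, ← ofReal_cdf P b, hFb_eq]
    rw [key, volume_Iic_inter_Ioo hy0 hy1.le]

lemma cdf_quantileFn (P : Measure ℝ) [IsProbabilityMeasure P] (hFP : Continuous (cdf P))
    {x : ℝ} (hx : x ∈ Set.Ioo (0:ℝ) 1) : cdf P (quantileFn P x) = x := by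
  refine le_antisymm ?_ (le_cdf_quantileFn P hx.1 hx.2)
  set q := quantileFn P x with hq
  have hlt : ∀ z, z < q → cdf P z < x := by
    intro z hz
    by_contra h
    push_neg at h
    have : q ≤ z := by
      rw [hq, quantileFn_eq]
      exact csInf_le (bddBelow_quantileSet P hx.1) h
    linarith
  have htend : Filter.Tendsto (fun n : ℕ => cdf P (q - 1/(n+1))) atTop (𝓝 (cdf P q)) := by
    apply (hFP.tendsto q).comp
    have : Filter.Tendsto (fun n : ℕ => (1:ℝ)/(n+1)) atTop (𝓝 0) :=
      tendsto_one_div_add_atTop_nhds_zero_nat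
    simpa using (tendsto_const_nhds (x := q)).sub this
  refine le_of_tendsto htend (Filter.Eventually.of_forall fun n => ?_)
  refine (hlt _ ?_).le
  have : (0:ℝ) < 1/(n+1) := by positivity
  linarith

/-- if `F_P` is continuous then `T^com := F_Q^← ∘ F_P` pushes `P`
forward to `Q`, and the pushforward of `P` under `x ↦ (x, T^com(x))` equals the
comonotone coupling `𝔓^com`, i.e. the pushforward of Lebesgue measure on
`(0,1)` under `x ↦ (F_P^←(x), F_Q^←(x))`. -/
theorem deterministic_comonotone_transport (P Q : Measure ℝ)
    [IsProbabilityMeasure P] [IsProbabilityMeasure Q]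
    (hFP : Continuous (fun z : ℝ => (P (Set.Iic z)).toReal)) :
    P.map (fun x => quantileFn Q ((P (Set.Iic x)).toReal)) = Q
    ∧ P.map (fun x => (x, quantileFn Q ((P (Set.Iic x)).toReal)))
        = (volume.restrict (Set.Ioo (0:ℝ) 1)).map
            (fun x => (quantileFn P x, quantileFn Q x)) := by
  set μ := volume.restrict (Set.Ioo (0:ℝ) 1) with hμ
  have hcdfP : Continuous (cdf P) := by
    have : (fun z : ℝ => (P (Set.Iic z)).toReal) = cdf P := by
      funext z; rw [cdf_eq_real, measureReal_def]
    rwa [this] at hFP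
  have hfun : (fun x => quantileFn Q ((P (Set.Iic x)).toReal))
      = fun x => quantileFn Q (cdf P x) := by
    funext x; rw [cdf_eq_real, measureReal_def]
  -- P = μ.map (quantileFn P)
  have hP : μ.map (quantileFn P) = P := map_quantileFn P
  -- P.map (cdf P) = μ
  have hmapcdf : P.map (cdf P) = μ := map_cdf P hcdfP
  -- g := quantileFn Q ∘ cdf P is AEMeasurable wrt P
  have hg : AEMeasurable (fun x => quantileFn Q (cdf P x)) P := by
    apply AEMeasurable.comp_aemeasurable' (f := cdf P) (g := quantileFn Q)
    · rw [hmapcdf]; exact aemeasurable_quantileFn Q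
    · exact hcdfP.measurable.aemeasurable
  -- key a.e. identity on μ
  have hae : ∀ᵐ x ∂μ, quantileFn Q (cdf P (quantileFn P x)) = quantileFn Q x := by
    rw [hμ]
    filter_upwards [ae_restrict_mem measurableSet_Ioo] with x hx
    rw [cdf_quantileFn P hcdfP hx]
  have hfun2 : (fun x => (x, quantileFn Q ((P (Set.Iic x)).toReal)))
      = fun x : ℝ => (x, quantileFn Q (cdf P x)) := by
    funext x; rw [cdf_eq_real, measureReal_def]
  have hg2 : AEMeasurable (fun x => (x, quantileFn Q (cdf P x))) P :=
    aemeasurable_id.prodMk hg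
  constructor
  · rw [hfun]
    calc P.map (fun x => quantileFn Q (cdf P x))
        = (μ.map (quantileFn P)).map (fun x => quantileFn Q (cdf P x)) := by rw [hP]
      _ = μ.map ((fun x => quantileFn Q (cdf P x)) ∘ quantileFn P) :=
          AEMeasurable.map_map_of_aemeasurable (by rw [hP]; exact hg)
            (aemeasurable_quantileFn P)
      _ = μ.map (quantileFn Q) := by
          apply Measure.map_congr
          filter_upwards [hae] with x hx
          simpa [Function.comp] using hx
      _ = Q := map_quantileFn Q
  · rw [hfun2]
    calc P.map (fun x => (x, quantileFn Q (cdf P x)))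
        = (μ.map (quantileFn P)).map (fun x => (x, quantileFn Q (cdf P x))) := by rw [hP]
      _ = μ.map ((fun x => (x, quantileFn Q (cdf P x))) ∘ quantileFn P) :=
          AEMeasurable.map_map_of_aemeasurable (by rw [hP]; exact hg2)
            (aemeasurable_quantileFn P)
      _ = μ.map (fun x => (quantileFn P x, quantileFn Q x)) := by
          apply Measure.map_congr
          filter_upwards [hae] with x hx
          simp only [Function.comp_apply, hx]
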